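/- The history state |η⟩ = (1/√(T+1)) Σ_{t=0}^T (U_t⋯U_1|χ⟩) ⊗ |t⟩ satisfies H_prop^t |η⟩ = 0 for every t ∈ [T], where H_prop^t = (1/2)(I⊗|t⟩⟨t| + I⊗|t-1⟩⟨t-1| − U_t⊗|t⟩⟨t-1| − U_t†⊗|t-1⟩⟨t|). -/

import Mathlib

open Matrix Kronecker Finset Real

lemma key17 {N T : ℕ} (A : Matrix (Fin N) (Fin N) ℂ) (W : ℕ → Matrix (Fin N) (Fin N) ℂ)
    (b : ℕ → Fin (T+1) → ℂ)
    (hb : ∀ k ≤ T, b k = fun i : Fin (T+1) => if (i:ℕ) = k then (1:ℂ) else 0)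
    (χ : Fin N → ℂ) (c : ℂ) (a a' : ℕ) (ha : a < T+1) (ha' : a' < T+1) :
    (A ⊗ₖ vecMulVec (b a) (star (b a'))) *ᵥ
      (c • ∑ s ∈ Finset.range (T+1), fun p : Fin N × Fin (T+1) => (W s *ᵥ χ) p.1 * b s p.2)
      = fun p => c * b a p.2 * (A *ᵥ (W a' *ᵥ χ)) p.1 := by
  have hη' : (∑ s ∈ Finset.range (T+1), fun p : Fin N × Fin (T+1) => (W s *ᵥ χ) p.1 * b s p.2)
      = fun p => (W (p.2 : ℕ) *ᵥ χ) p.1 := by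
    funext p
    rw [Finset.sum_apply, Finset.sum_eq_single (p.2 : ℕ)]
    · rw [hb _ (Nat.lt_succ_iff.mp p.2.isLt)]; simp
    · intro s hs hne
      rw [hb _ (Nat.lt_succ_iff.mp (Finset.mem_range.mp hs))]
      simp [Ne.symm hne]
    · intro h; exact absurd (Finset.mem_range.mpr p.2.isLt) h
  rw [hη']
  funext p
  obtain ⟨i, j⟩ := p
  have hbj : b a j = if (j : ℕ) = a then (1:ℂ) else 0 := by
    rw [hb _ (Nat.lt_succ_iff.mp ha)]
  have hcond : ∀ x : Fin (T+1), ((x:ℕ) = a') = (x = ⟨a', ha'⟩) := by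
    intro x; simp [Fin.ext_iff]
  simp only [mulVec, dotProduct, Fintype.sum_prod_type, kroneckerMap_apply, vecMulVec_apply,
    Pi.smul_apply, smul_eq_mul, hbj, hb _ (Nat.lt_succ_iff.mp ha'), Pi.star_apply]
  simp only [hcond, apply_ite (star : ℂ → ℂ), star_one, star_zero, mul_ite, ite_mul, mul_zero,
    zero_mul, mul_one, one_mul, Finset.sum_ite_eq, Finset.sum_ite_eq', Finset.mem_univ, if_true]
  split
  · simp only [Finset.mul_sum]
    exact Finset.sum_congr rfl fun x _ => Finset.sum_congr rfl fun y _ => by ring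
  · simp


theorem stmt17 (N T : ℕ) (U W : ℕ → Matrix (Fin N) (Fin N) ℂ)
    (hU : ∀ t, U t ∈ Matrix.unitaryGroup (Fin N) ℂ)
    (hW0 : W 0 = 1) (hW : ∀ t, W (t + 1) = U (t + 1) * W t)
    (b : ℕ → Fin (T + 1) → ℂ)
    (hb : ∀ k ≤ T, b k = fun i : Fin (T + 1) => if (i : ℕ) = k then (1 : ℂ) else 0)
    (χ : Fin N → ℂ)
    (η : Fin N × Fin (T + 1) → ℂ)
    (hη : η = ((Real.sqrt (T + 1) : ℂ))⁻¹ • ∑ t ∈ Finset.range (T + 1),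
        fun p : Fin N × Fin (T + 1) => (W t *ᵥ χ) p.1 * b t p.2)
    (t : ℕ) (ht1 : 1 ≤ t) (htT : t ≤ T) :
    ((1/2 : ℂ) •
      ((1 : Matrix (Fin N) (Fin N) ℂ) ⊗ₖ vecMulVec (b t) (star (b t))
        + (1 : Matrix (Fin N) (Fin N) ℂ) ⊗ₖ vecMulVec (b (t-1)) (star (b (t-1)))
        - U t ⊗ₖ vecMulVec (b t) (star (b (t-1)))
        - (U t)ᴴ ⊗ₖ vecMulVec (b (t-1)) (star (b t)))) *ᵥ η = 0 := by
  subst hη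
  have ht : t < T + 1 := by omega
  have ht' : t - 1 < T + 1 := by omega
  rw [smul_mulVec, sub_mulVec, sub_mulVec, add_mulVec,
    key17 _ W b hb χ _ t t ht ht, key17 _ W b hb χ _ (t-1) (t-1) ht' ht',
    key17 _ W b hb χ _ t (t-1) ht ht', key17 _ W b hb χ _ (t-1) t ht' ht]
  have hWt : W t = U t * W (t - 1) := by
    have := hW (t - 1)
    rwa [Nat.sub_add_cancel ht1] at this
  have h3 : U t *ᵥ (W (t-1) *ᵥ χ) = W t *ᵥ χ := by
    rw [mulVec_mulVec, ← hWt]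
  have h4 : (U t)ᴴ *ᵥ (W t *ᵥ χ) = W (t-1) *ᵥ χ := by
    rw [mulVec_mulVec, hWt, ← Matrix.mul_assoc]
    have hu : (U t)ᴴ * U t = 1 := (hU t).1
    rw [hu, Matrix.one_mul]
  rw [h3, h4]
  funext p
  simp [one_mulVec]
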